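/- Let T_n be a transfer matrix on E_n = {0,1}^n. Suppose Q^x_{(0)} = V^x_{(0)} H^x_{(0)} with V^x_{(0)} H^y_{(0)} = 0 for x ≠ y, and let μ_{(0)}(x) = Trace(∏_i Q^{x_i}_{(0)}). Suppose there exist matrices h_{xy}, v_{xy} (x,y ∈ {0,1}) of compatible sizes such that Trace(∏_{i=0}^{n-1} h_{y_i, x_{i⊕1}} v_{y_{i⊕1}, x_{i⊕1}}) = T_n(y, x) for all x,y ∈ E_n. Define V^x_{(1)} = Σ_y H^y_{(0)} ⊗ h_{y,x}, H^x_{(1)} = Σ_y V^y_{(0)} ⊗ v_{y,x}, Q^x_{(1)} = V^x_{(1)} H^x_{(1)}, and μ_{(1)}(x) = Trace(∏_i Q^{x_i}_{(1)}). Then μ_{(1)} = μ_{(0)} T_n. -/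

import Mathlib

open Matrix Kronecker

open Matrix Finset

private lemma sum_pi_prod {ι κ α : Type*} [Fintype ι] [DecidableEq ι] [Fintype κ] [CommRing α]
    (f : ι → κ → α) : ∑ x : ι → κ, ∏ i, f i (x i) = ∏ i, ∑ j, f i j := by
  rw [Finset.prod_univ_sum, Fintype.piFinset_univ]

private lemma shift_arrow_apply {N : ℕ} {p : Type*} (b : Fin (N+1) → p) (i : Fin (N+1)) :
    (Equiv.arrowCongr (Equiv.addRight (1 : Fin (N+1))) (Equiv.refl p)) b i = b (i - 1) := by
  simp [Equiv.arrowCongr, Equiv.subRight, sub_eq_add_neg]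

private lemma rot_sum {N : ℕ} {p : Type*} [Fintype p] (f : Fin (N+1) → p → p → ℂ) :
    ∑ b : Fin (N+1) → p, ∏ i, f (i+1) (b i) (b (i+1))
      = ∑ b : Fin (N+1) → p, ∏ i, f i (b i) (b (i+1)) := by
  rw [← ((Equiv.addRight (1 : Fin (N+1))).arrowCongr (Equiv.refl p)).sum_comp
      (fun b => ∏ i, f i (b i) (b (i+1)))]
  refine Finset.sum_congr rfl fun b _ => ?_
  simp only [shift_arrow_apply, add_sub_cancel_right]
  exact Fintype.prod_equiv (Equiv.addRight (1 : Fin (N+1)))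
    (fun i => f (i+1) (b i) (b (i+1))) (fun j => f j (b (j-1)) (b j))
    (fun i => by simp)


private lemma ofFn_prod_apply {p : Type*} [Fintype p] [DecidableEq p] :
    ∀ (N : ℕ) (A : Fin N → Matrix p p ℂ) (a b : p),
    (List.ofFn A).prod a b =
      ∑ k : Fin N → p, (∏ i : Fin N, A i ((Fin.cons a k : Fin (N+1) → p) i.castSucc) (k i)) *
        (if (Fin.cons a k : Fin (N+1) → p) (Fin.last N) = b then 1 else 0) := by
  intro N
  induction N with
  | zero =>
      intro A a b
      rw [Fintype.sum_eq_single (fun i => i.elim0)]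
      · simp [Matrix.one_apply]
      · intro x hx; exact absurd (Subsingleton.elim _ _) hx
  | succ N ih =>
      intro A a b
      rw [List.ofFn_succ, List.prod_cons, Matrix.mul_apply]
      simp only [ih]
      rw [← (Fin.consEquiv (fun _ : Fin (N+1) => p)).sum_comp]
      rw [Fintype.sum_prod_type]
      refine Finset.sum_congr rfl fun c _ => ?_
      rw [Finset.mul_sum]
      refine Finset.sum_congr rfl fun k _ => ?_
      rw [Fin.prod_univ_succ, ← mul_assoc]
      simp [Fin.consEquiv_apply, ← Fin.succ_castSucc, ← Fin.succ_last]

private lemma fin_zero_sub_one (N : ℕ) : (0 - 1 : Fin (N+1)) = Fin.last N := by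
  apply Fin.ext
  rw [Fin.coe_sub_one]
  simp [Fin.last]

private lemma fin_succ_sub_one {N : ℕ} (j : Fin N) : (j.succ - 1 : Fin (N+1)) = j.castSucc := by
  apply Fin.ext
  rw [Fin.coe_sub_one]
  simp [Fin.succ_ne_zero]


private lemma trace_ofFn_prod {p : Type*} [Fintype p] [DecidableEq p] (N : ℕ)
    (A : Fin (N + 1) → Matrix p p ℂ)
    (hL0 : ∀ (a b : p), (List.ofFn A).prod a b =
      ∑ k : Fin (N+1) → p, (∏ i : Fin (N+1), A i ((Fin.cons a k : Fin (N+2) → p) i.castSucc) (k i)) *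
        (if (Fin.cons a k : Fin (N+2) → p) (Fin.last (N+1)) = b then 1 else 0)) :
    Matrix.trace (List.ofFn A).prod = ∑ k : Fin (N+1) → p, ∏ i, A i (k i) (k (i + 1)) := by
  rw [Matrix.trace]
  simp only [Matrix.diag, hL0]
  rw [Finset.sum_comm]
  have step1 : ∀ k : Fin (N+1) → p,
      (∑ a : p, (∏ i : Fin (N+1), A i ((Fin.cons a k : Fin (N+2) → p) i.castSucc) (k i)) *
        (if (Fin.cons a k : Fin (N+2) → p) (Fin.last (N+1)) = a then 1 else 0))
      = ∏ i : Fin (N+1), A i (k (i - 1)) (k i) := by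
    intro k
    have hlast : ∀ a : p, (Fin.cons a k : Fin (N+2) → p) (Fin.last (N+1)) = k (Fin.last N) := by
      intro a; rw [← Fin.succ_last, Fin.cons_succ]
    simp only [hlast, mul_ite, mul_one, mul_zero]
    rw [Finset.sum_ite_eq Finset.univ (k (Fin.last N))
      (fun a => ∏ i : Fin (N+1), A i ((Fin.cons a k : Fin (N+2) → p) i.castSucc) (k i))]
    simp only [Finset.mem_univ, if_true]
    refine Finset.prod_congr rfl fun i _ => ?_
    congr 1
    induction i using Fin.cases with
    | zero => rw [Fin.castSucc_zero, Fin.cons_zero, fin_zero_sub_one]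
    | succ j => rw [← Fin.succ_castSucc, Fin.cons_succ, fin_succ_sub_one]
  simp only [step1]
  apply Finset.sum_nbij' (fun k => fun i => k (i - 1)) (fun k => fun i => k (i + 1))
  · intros; exact Finset.mem_univ _
  · intros; exact Finset.mem_univ _
  · intro k _; funext i; simp
  · intro k _; funext i; simp
  · intro k _
    refine Finset.prod_congr rfl fun i _ => ?_
    congr 1
    simp


private lemma traceE {p : Type*} [Fintype p] [DecidableEq p] (N : ℕ)
    (A : Fin (N + 1) → Matrix p p ℂ) :
    Matrix.trace (List.ofFn A).prod = ∑ k : Fin (N+1) → p, ∏ i, A i (k i) (k (i + 1)) :=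
  trace_ofFn_prod N A (ofFn_prod_apply (N+1) A)
private lemma shift_arrow_apply' {N : ℕ} {p : Type*} (b : Fin (N+1) → p) (i : Fin (N+1)) :
    (Equiv.arrowCongr (Equiv.subRight (1 : Fin (N+1))) (Equiv.refl p)) b i = b (i + 1) := by
  simp [Equiv.arrowCongr, Equiv.subRight]

private lemma lemF {n m l : ℕ} (V0 : Bool → Matrix (Fin m) (Fin l) ℂ)
    (H0 : Bool → Matrix (Fin l) (Fin m) ℂ) (y z : Fin (n+1) → Bool) :
    Matrix.trace (List.ofFn fun i => H0 (y i) * V0 (z i)).prod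
      = ∑ b : Fin (n+1) → Fin m, ∏ i, (V0 (z i) * H0 (y (i+1))) (b i) (b (i+1)) := by
  rw [traceE]
  calc ∑ a : Fin (n+1) → Fin l, ∏ i, (H0 (y i) * V0 (z i)) (a i) (a (i+1))
      = ∑ a : Fin (n+1) → Fin l, ∑ b : Fin (n+1) → Fin m,
          ∏ i, H0 (y i) (a i) (b i) * V0 (z i) (b i) (a (i+1)) := by
        refine Finset.sum_congr rfl fun a _ => ?_
        rw [sum_pi_prod (fun i c => H0 (y i) (a i) c * V0 (z i) c (a (i+1)))]
        exact Finset.prod_congr rfl fun i _ => (Matrix.mul_apply)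
    _ = ∑ b : Fin (n+1) → Fin m, ∑ a : Fin (n+1) → Fin l,
          ∏ i, V0 (z i) (b i) (a (i+1)) * H0 (y (i+1)) (a (i+1)) (b (i+1)) := by
        rw [Finset.sum_comm]
        refine Finset.sum_congr rfl fun b _ => Finset.sum_congr rfl fun a _ => ?_
        rw [Finset.prod_mul_distrib, Finset.prod_mul_distrib, mul_comm]
        congr 1
        exact (Equiv.prod_comp (Equiv.addRight (1 : Fin (n+1)))
          (fun j => H0 (y j) (a j) (b j))).symm
    _ = ∑ b : Fin (n+1) → Fin m, ∏ i, (V0 (z i) * H0 (y (i+1))) (b i) (b (i+1)) := by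
        refine Finset.sum_congr rfl fun b _ => ?_
        have h1 : ∀ a : Fin (n+1) → Fin l,
            (∏ i, V0 (z i) (b i) (a (i+1)) * H0 (y (i+1)) (a (i+1)) (b (i+1)))
            = (fun a' : Fin (n+1) → Fin l =>
                ∏ i, V0 (z i) (b i) (a' i) * H0 (y (i+1)) (a' i) (b (i+1)))
              (((Equiv.subRight (1:Fin (n+1))).arrowCongr (Equiv.refl (Fin l))) a) := by
          intro a
          refine Finset.prod_congr rfl fun i _ => ?_
          rw [shift_arrow_apply' a i]
        rw [Finset.sum_congr rfl (fun a _ => h1 a),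
          ((Equiv.subRight (1:Fin (n+1))).arrowCongr (Equiv.refl (Fin l))).sum_comp
            (fun a' : Fin (n+1) → Fin l =>
              ∏ i, V0 (z i) (b i) (a' i) * H0 (y (i+1)) (a' i) (b (i+1))),
          sum_pi_prod (fun i c => V0 (z i) (b i) c * H0 (y (i+1)) c (b (i+1)))]
        exact Finset.prod_congr rfl fun i _ => (Matrix.mul_apply).symm

private lemma lem_vanish {n m l : ℕ} (V0 : Bool → Matrix (Fin m) (Fin l) ℂ)
    (H0 : Bool → Matrix (Fin l) (Fin m) ℂ)
    (hVH0 : ∀ x y, x ≠ y → V0 x * H0 y = 0)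
    (y z : Fin (n+1) → Bool) (hz : z ≠ fun i => y (i + 1)) :
    Matrix.trace (List.ofFn fun i => H0 (y i) * V0 (z i)).prod = 0 := by
  rw [lemF]
  refine Finset.sum_eq_zero fun b _ => ?_
  obtain ⟨j, hj⟩ : ∃ j, z j ≠ y (j + 1) := by
    by_contra hc; push_neg at hc; exact hz (funext hc)
  refine Finset.prod_eq_zero (Finset.mem_univ j) ?_
  rw [hVH0 _ _ hj, Matrix.zero_apply]

private lemma lem_diag {n m l : ℕ} (V0 : Bool → Matrix (Fin m) (Fin l) ℂ)
    (H0 : Bool → Matrix (Fin l) (Fin m) ℂ) (y : Fin (n+1) → Bool) :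
    Matrix.trace (List.ofFn fun i => H0 (y i) * V0 (y (i+1))).prod
      = Matrix.trace (List.ofFn fun i => V0 (y i) * H0 (y i)).prod := by
  rw [lemF, traceE]
  exact rot_sum (fun i c c' => (V0 (y i) * H0 (y i)) c c')

private lemma mu0_shift {n m : ℕ} (Q : Fin (n+1) → Matrix (Fin m) (Fin m) ℂ) :
    Matrix.trace (List.ofFn fun i => Q (i+1)).prod
      = Matrix.trace (List.ofFn Q).prod := by
  rw [traceE, traceE]
  exact rot_sum (fun i c c' => Q i c c')

set_option maxHeartbeats 1000000

/-- Second fundamental lemma, part 1: one-step evolution of the trace measure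
under a transfer matrix admitting a trace factorization by matrices
`h_{x,y}, v_{x,y}`, via the Kronecker-product rewriting of `V` and `H`. -/
theorem one_step_evolution_of_trace_measure (n m l d e : ℕ)
    (Tn : (Fin (n + 1) → Bool) → (Fin (n + 1) → Bool) → ℂ)
    (V0 : Bool → Matrix (Fin m) (Fin l) ℂ)
    (H0 : Bool → Matrix (Fin l) (Fin m) ℂ)
    (hVH0 : ∀ x y, x ≠ y → V0 x * H0 y = 0)
    (h : Bool → Bool → Matrix (Fin d) (Fin e) ℂ)
    (v : Bool → Bool → Matrix (Fin e) (Fin d) ℂ)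
    (hT : ∀ y x : Fin (n + 1) → Bool,
      Matrix.trace ((List.ofFn fun i =>
        h (y i) (x (i + 1)) * v (y (i + 1)) (x (i + 1))).prod) = Tn y x)
    (V1 : Bool → Matrix (Fin l × Fin d) (Fin m × Fin e) ℂ)
    (H1 : Bool → Matrix (Fin m × Fin e) (Fin l × Fin d) ℂ)
    (hV1 : ∀ x, V1 x = ∑ y : Bool, H0 y ⊗ₖ h y x)
    (hH1 : ∀ x, H1 x = ∑ y : Bool, V0 y ⊗ₖ v y x)
    (μ0 μ1 : (Fin (n + 1) → Bool) → ℂ)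
    (hμ0 : ∀ x, μ0 x = Matrix.trace ((List.ofFn fun i => V0 (x i) * H0 (x i)).prod))
    (hμ1 : ∀ x, μ1 x = Matrix.trace ((List.ofFn fun i => V1 (x i) * H1 (x i)).prod)) :
    ∀ x, μ1 x = ∑ y : Fin (n + 1) → Bool, μ0 y * Tn y x := by
  intro x
  have hQ1 : ∀ a : Bool, V1 a * H1 a
      = ∑ yz : Bool × Bool, (H0 yz.1 * V0 yz.2) ⊗ₖ (h yz.1 a * v yz.2 a) := by
    intro a
    rw [hV1, hH1, Matrix.sum_mul, Fintype.sum_prod_type]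
    refine Finset.sum_congr rfl fun yy _ => ?_
    rw [Matrix.mul_sum]
    exact Finset.sum_congr rfl fun zz _ =>
      (Matrix.mul_kronecker_mul (H0 yy) (V0 zz) (h yy a) (v zz a)).symm
  have stepA : ∀ (k : Fin (n+1) → Fin l × Fin d) (i : Fin (n+1)),
      (V1 (x i) * H1 (x i)) (k i) (k (i+1))
        = ∑ yz : Bool × Bool, (H0 yz.1 * V0 yz.2) (k i).1 (k (i+1)).1
            * (h yz.1 (x i) * v yz.2 (x i)) (k i).2 (k (i+1)).2 := by
    intro k i
    rw [hQ1, Matrix.sum_apply]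
    exact Finset.sum_congr rfl fun yz _ => rfl
  have hRHS : ∑ y : Fin (n + 1) → Bool, μ0 y * Tn y x
      = ∑ y : Fin (n+1) → Bool,
          Matrix.trace (List.ofFn fun i => V0 (y i) * H0 (y i)).prod *
          Matrix.trace (List.ofFn fun i => h (y i) (x i) * v (y (i+1)) (x i)).prod := by
    rw [← Equiv.sum_comp ((Equiv.subRight (1 : Fin (n+1))).arrowCongr (Equiv.refl Bool))
        (fun y => μ0 y * Tn y x)]
    refine Finset.sum_congr rfl fun y _ => ?_
    have hy : ∀ i, ((Equiv.subRight (1 : Fin (n+1))).arrowCongr (Equiv.refl Bool)) y i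
        = y (i+1) := shift_arrow_apply' y
    congr 1
    · rw [hμ0]
      simp only [hy]
      exact mu0_shift (fun i => V0 (y i) * H0 (y i))
    · rw [← hT]
      simp only [hy]
      exact mu0_shift (fun i => h (y i) (x i) * v (y (i+1)) (x i))
  rw [hμ1 x, traceE, hRHS]
  calc (∑ k : Fin (n+1) → Fin l × Fin d, ∏ i, (V1 (x i) * H1 (x i)) (k i) (k (i+1)))
      = ∑ k : Fin (n+1) → Fin l × Fin d, ∑ g : Fin (n+1) → Bool × Bool,
          ∏ i, (H0 (g i).1 * V0 (g i).2) (k i).1 (k (i+1)).1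
            * (h (g i).1 (x i) * v (g i).2 (x i)) (k i).2 (k (i+1)).2 := by
        refine Finset.sum_congr rfl fun k _ => ?_
        rw [sum_pi_prod (fun i (yz : Bool × Bool) => (H0 yz.1 * V0 yz.2) (k i).1 (k (i+1)).1
          * (h yz.1 (x i) * v yz.2 (x i)) (k i).2 (k (i+1)).2)]
        exact Finset.prod_congr rfl fun i _ => stepA k i
    _ = ∑ g : Fin (n+1) → Bool × Bool, ∑ k : Fin (n+1) → Fin l × Fin d,
          ∏ i, (H0 (g i).1 * V0 (g i).2) (k i).1 (k (i+1)).1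
            * (h (g i).1 (x i) * v (g i).2 (x i)) (k i).2 (k (i+1)).2 := Finset.sum_comm
    _ = ∑ g : Fin (n+1) → Bool × Bool,
          Matrix.trace (List.ofFn fun i => H0 (g i).1 * V0 (g i).2).prod *
          Matrix.trace (List.ofFn fun i => h (g i).1 (x i) * v (g i).2 (x i)).prod := by
        refine Finset.sum_congr rfl fun g _ => ?_
        calc (∑ k : Fin (n+1) → Fin l × Fin d,
              ∏ i, (H0 (g i).1 * V0 (g i).2) (k i).1 (k (i+1)).1
                * (h (g i).1 (x i) * v (g i).2 (x i)) (k i).2 (k (i+1)).2)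
            = ∑ k : Fin (n+1) → Fin l × Fin d,
                (fun q : (Fin (n+1) → Fin l) × (Fin (n+1) → Fin d) =>
                  (∏ i, (H0 (g i).1 * V0 (g i).2) (q.1 i) (q.1 (i+1)))
                  * ∏ i, (h (g i).1 (x i) * v (g i).2 (x i)) (q.2 i) (q.2 (i+1)))
                  ((Equiv.arrowProdEquivProdArrow (Fin (n+1)) (fun _ => Fin l) (fun _ => Fin d)) k) :=
              Finset.sum_congr rfl fun k _ => Finset.prod_mul_distrib
          _ = ∑ q : (Fin (n+1) → Fin l) × (Fin (n+1) → Fin d),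
                (∏ i, (H0 (g i).1 * V0 (g i).2) (q.1 i) (q.1 (i+1)))
                * ∏ i, (h (g i).1 (x i) * v (g i).2 (x i)) (q.2 i) (q.2 (i+1)) :=
              Equiv.sum_comp (Equiv.arrowProdEquivProdArrow (Fin (n+1)) (fun _ => Fin l) (fun _ => Fin d))
                (fun q : (Fin (n+1) → Fin l) × (Fin (n+1) → Fin d) =>
                  (∏ i, (H0 (g i).1 * V0 (g i).2) (q.1 i) (q.1 (i+1)))
                  * ∏ i, (h (g i).1 (x i) * v (g i).2 (x i)) (q.2 i) (q.2 (i+1)))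
          _ = (∑ k1 : Fin (n+1) → Fin l, ∏ i, (H0 (g i).1 * V0 (g i).2) (k1 i) (k1 (i+1)))
              * ∑ k2 : Fin (n+1) → Fin d, ∏ i, (h (g i).1 (x i) * v (g i).2 (x i)) (k2 i) (k2 (i+1)) := by
              rw [Finset.sum_mul_sum]
              exact Fintype.sum_prod_type
                (f := fun q : (Fin (n+1) → Fin l) × (Fin (n+1) → Fin d) =>
                  (∏ i, (H0 (g i).1 * V0 (g i).2) (q.1 i) (q.1 (i+1)))
                  * ∏ i, (h (g i).1 (x i) * v (g i).2 (x i)) (q.2 i) (q.2 (i+1)))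
          _ = Matrix.trace (List.ofFn fun i => H0 (g i).1 * V0 (g i).2).prod *
              Matrix.trace (List.ofFn fun i => h (g i).1 (x i) * v (g i).2 (x i)).prod := by
              rw [traceE, traceE]
    _ = ∑ y : Fin (n+1) → Bool, ∑ z : Fin (n+1) → Bool,
          Matrix.trace (List.ofFn fun i => H0 (y i) * V0 (z i)).prod *
          Matrix.trace (List.ofFn fun i => h (y i) (x i) * v (z i) (x i)).prod := by
        rw [← Equiv.sum_comp (Equiv.arrowProdEquivProdArrow (Fin (n+1)) (fun _ => Bool) (fun _ => Bool)).symm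
            (fun g : Fin (n+1) → Bool × Bool =>
              Matrix.trace (List.ofFn fun i => H0 (g i).1 * V0 (g i).2).prod *
              Matrix.trace (List.ofFn fun i => h (g i).1 (x i) * v (g i).2 (x i)).prod),
          Fintype.sum_prod_type]
        rfl
    _ = ∑ y : Fin (n+1) → Bool,
          Matrix.trace (List.ofFn fun i => V0 (y i) * H0 (y i)).prod *
          Matrix.trace (List.ofFn fun i => h (y i) (x i) * v (y (i+1)) (x i)).prod := by
        refine Finset.sum_congr rfl fun y _ => ?_
        rw [Finset.sum_eq_single (fun i => y (i + 1))]
        · rw [show (Matrix.trace (List.ofFn fun i => H0 (y i) * V0 (y (i+1))).prod)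
            = Matrix.trace (List.ofFn fun i => V0 (y i) * H0 (y i)).prod from lem_diag V0 H0 y]
        · intro z _ hz
          rw [lem_vanish V0 H0 hVH0 y z hz, zero_mul]
        · intro habs; exact absurd (Finset.mem_univ _) habs
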